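/- Any structure S' compatible with the k-stutter w^[k] of a sequence w under a bipartite energy model induces an interaction multigraph on positions of w that is bipartite with maximum degree at most k, and hence its base pairs can be partitioned into k secondary structures S'₁,…,S'ₖ each compatible with w, with Σᵢ E(w,S'ᵢ) = E(w^[k], S'). -/

import Mathlib

open scoped Classical

/-- An RNA nucleotide. -/
inductive Base | A | U | C | G
deriving DecidableEq, Inhabited, Repr

/-- The Watson-Crick pairing relation (only G-C and A-U pairs allowed). -/
def wcPair : Base → Base → Prop
  | .G, .C => True | .C, .G => True
  | .A, .U => True | .U, .A => True
  | _, _ => False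

/-- The Nussinov-Jacobson pairing relation (G-C, A-U and G-U pairs allowed). -/
def njPair : Base → Base → Prop
  | .G, .C => True | .C, .G => True
  | .A, .U => True | .U, .A => True
  | .G, .U => True | .U, .G => True
  | _, _ => False

/-- An RNA (pseudoknot-free) secondary structure, 0-indexed positions. -/
structure SecStr where
  len : ℕ
  pairs : Finset (ℕ × ℕ)
  lt : ∀ p ∈ pairs, p.1 < p.2
  ub : ∀ p ∈ pairs, p.2 < len
  once : ∀ p ∈ pairs, ∀ q ∈ pairs, p ≠ q →
    p.1 ≠ q.1 ∧ p.1 ≠ q.2 ∧ p.2 ≠ q.1 ∧ p.2 ≠ q.2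
  noncross : ∀ p ∈ pairs, ∀ q ∈ pairs,
    ¬ (p.1 < q.1 ∧ q.1 < p.2 ∧ p.2 < q.2)

def SecStr.pairedAt (S : SecStr) (i : ℕ) : Prop := ∃ p ∈ S.pairs, p.1 = i ∨ p.2 = i
def SecStr.unpairedAt (S : SecStr) (i : ℕ) : Prop := i < S.len ∧ ¬ S.pairedAt i
def SecStr.saturated (S : SecStr) : Prop := ∀ i < S.len, S.pairedAt i

/-- A structure is compatible with a sequence `w` (w.r.t. pairing relation `R`)
if it has the right length and all base pairs are `R`-valid. -/
def compat {α : Type*} [Inhabited α] (R : α → α → Prop) (w : List α) (S : SecStr) : Prop :=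
  S.len = w.length ∧ ∀ p ∈ S.pairs, R (w.getD p.1 default) (w.getD p.2 default)

/-- Base-pair-sum free energy of a structure on a sequence. -/
noncomputable def energy {α : Type*} [Inhabited α] (E : α → α → ℝ) (w : List α)
    (S : SecStr) : ℝ :=
  ∑ p ∈ S.pairs, E (w.getD p.1 default) (w.getD p.2 default)

/-- `w` is a Δ-design for `S`: `S` is compatible with `w`, and every other
compatible structure has energy at least `energy E w S + Δ`. -/
def isDesign {α : Type*} [Inhabited α] (R : α → α → Prop) (E : α → α → ℝ) (Δ : ℝ)
    (w : List α) (S : SecStr) : Prop :=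
  compat R w S ∧ ∀ S' : SecStr, compat R w S' → S' ≠ S →
    energy E w S' ≥ energy E w S + Δ

/- Tree representation machinery. -/
def encloses (q p : ℕ × ℕ) : Prop := q.1 < p.1 ∧ p.2 < q.2
def SecStr.hasParent (S : SecStr) (p : ℕ × ℕ) : Prop := ∃ q ∈ S.pairs, encloses q p
def SecStr.isParentOf (S : SecStr) (q p : ℕ × ℕ) : Prop :=
  q ∈ S.pairs ∧ p ∈ S.pairs ∧ encloses q p ∧ ¬ ∃ m ∈ S.pairs, encloses q m ∧ encloses m p

/-- Degree of a paired node: number of paired children plus one for the parent (if any). -/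
noncomputable def SecStr.pairDeg (S : SecStr) (p : ℕ × ℕ) : ℕ :=
  (S.pairs.filter (fun c => S.isParentOf p c)).card + (if S.hasParent p then 1 else 0)
/-- Degree of the virtual root: number of top-level base pairs. -/
noncomputable def SecStr.rootDeg (S : SecStr) : ℕ :=
  (S.pairs.filter (fun p => ¬ S.hasParent p)).card
/-- All nodes of the tree representation (including the virtual root) have degree ≤ d. -/
def SecStr.degLE (S : SecStr) (d : ℕ) : Prop :=
  S.rootDeg ≤ d ∧ ∀ p ∈ S.pairs, S.pairDeg p ≤ d

/-- A sequence is saturable if a saturated structure is compatible with it. -/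
def saturable {α : Type*} [Inhabited α] (R : α → α → Prop) (w : List α) : Prop :=
  ∃ S : SecStr, compat R w S ∧ S.saturated
/-- Atomic saturable: saturable, and no (nonempty) proper prefix is saturable. -/
def atomicSaturable {α : Type*} [Inhabited α] (R : α → α → Prop) (w : List α) : Prop :=
  saturable R w ∧ ∀ k, 0 < k → k < w.length → ¬ saturable R (w.take k)

/- Motifs. -/
def SecStr.unpChildOfPair (S : SecStr) (q : ℕ × ℕ) (u : ℕ) : Prop :=
  S.unpairedAt u ∧ q.1 < u ∧ u < q.2 ∧
    ¬ ∃ m ∈ S.pairs, q.1 < m.1 ∧ m.1 < u ∧ u < m.2 ∧ m.2 < q.2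
def SecStr.unpChildOfRoot (S : SecStr) (u : ℕ) : Prop :=
  S.unpairedAt u ∧ ¬ ∃ m ∈ S.pairs, m.1 < u ∧ u < m.2
/-- Motif m₅ : a tree node (possibly the root) of degree greater than four. -/
def hasM5 (S : SecStr) : Prop := 4 < S.rootDeg ∨ ∃ p ∈ S.pairs, 4 < S.pairDeg p
/-- Motif m₃∘ : a node with an unpaired child and degree greater than two. -/
def hasM3o (S : SecStr) : Prop :=
  (∃ q ∈ S.pairs, (∃ u, S.unpChildOfPair q u) ∧ 2 < S.pairDeg q) ∨
  ((∃ u, S.unpChildOfRoot u) ∧ 2 < S.rootDeg)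

/- Colorings of the tree representation. -/
inductive Col | black | white | gray
deriving DecidableEq

noncomputable def childCount (S : SecStr) (col : ℕ × ℕ → Col) (q : ℕ × ℕ) (c : Col) : ℕ :=
  (S.pairs.filter (fun p => S.isParentOf q p ∧ col p = c)).card
noncomputable def rootChildCount (S : SecStr) (col : ℕ × ℕ → Col) (c : Col) : ℕ :=
  (S.pairs.filter (fun p => ¬ S.hasParent p ∧ col p = c)).card

/-- A proper coloring of the tree representation. -/
def properCol (S : SecStr) (col : ℕ × ℕ → Col) : Prop :=
  rootChildCount S col .black ≤ 1 ∧ rootChildCount S col .white ≤ 1 ∧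
  rootChildCount S col .gray ≤ 2 ∧
  ∀ q ∈ S.pairs,
    childCount S col q .black ≤ 1 ∧ childCount S col q .white ≤ 1 ∧
    childCount S col q .gray ≤ 2 ∧
    childCount S col q (col q) ≤ 1 ∧
    (col q = .black → ∀ p ∈ S.pairs, S.isParentOf q p → col p ≠ .white) ∧
    (col q = .white → ∀ p ∈ S.pairs, S.isParentOf q p → col p ≠ .black)

/-- Level of a paired node: #black minus #white on the path to the root (incl. itself). -/
noncomputable def pairLvl (S : SecStr) (col : ℕ × ℕ → Col) (p : ℕ × ℕ) : ℤ :=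
  ((S.pairs.filter (fun q => q.1 ≤ p.1 ∧ p.2 ≤ q.2 ∧ col q = .black)).card : ℤ) -
  ((S.pairs.filter (fun q => q.1 ≤ p.1 ∧ p.2 ≤ q.2 ∧ col q = .white)).card : ℤ)
/-- Level of an unpaired node. -/
noncomputable def unpLvl (S : SecStr) (col : ℕ × ℕ → Col) (u : ℕ) : ℤ :=
  ((S.pairs.filter (fun q => q.1 < u ∧ u < q.2 ∧ col q = .black)).card : ℤ) -
  ((S.pairs.filter (fun q => q.1 < u ∧ u < q.2 ∧ col q = .white)).card : ℤ)

/-- Separated coloring: gray-node levels and unpaired-node levels are disjoint. -/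
def separatedCol (S : SecStr) (col : ℕ × ℕ → Col) : Prop :=
  ∀ p ∈ S.pairs, col p = .gray → ∀ u, S.unpairedAt u →
    pairLvl S col p ≠ unpLvl S col u

/-- A bipartite energy model: its compatibility graph is bipartite. -/
def Bipartite {α : Type*} (R : α → α → Prop) : Prop :=
  ∃ f : α → Bool, ∀ a b, R a b → f a ≠ f b

/-- The k-stutter of a sequence. -/
def stutterSeq {α : Type*} (w : List α) (k : ℕ) : List α :=
  w.flatMap (fun a => List.replicate k a)
/-- The base pairs of the k-stutter of a structure. -/
def stutterPairs (S : SecStr) (k : ℕ) : Finset (ℕ × ℕ) :=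
  S.pairs.biUnion (fun p => (Finset.range k).image
    (fun m => (k * p.1 + m, k * p.2 + (k - 1 - m))))

/-- Two base pairs belong to the same band (maximal stack) of S. -/
def sameBand (S : SecStr) (p p' : ℕ × ℕ) : Prop :=
  p ∈ S.pairs ∧ p' ∈ S.pairs ∧ p.1 + p.2 = p'.1 + p'.2 ∧
  ∀ x, min p.1 p'.1 ≤ x → x ≤ max p.1 p'.1 → (x, p.1 + p.2 - x) ∈ S.pairs

/-- Nussinov-Jacobson energies: a for G-C, b for A-U, g for G-U. -/
def njE (a b g : ℝ) : Base → Base → ℝ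
  | .G, .C => a | .C, .G => a
  | .A, .U => b | .U, .A => b
  | .G, .U => g | .U, .G => g
  | _, _ => 0

/-- level of position i : #G minus #C in the prefix of w ending at i. -/
def lvl (w : List Base) (i : ℕ) : ℤ :=
  ((w.take (i+1)).count Base.G : ℤ) - ((w.take (i+1)).count Base.C : ℤ)


lemma koenig {α : Type*} [DecidableEq α] (k : ℕ) (v1 v2 : α → ℕ) (g : ℕ → Bool)
    (E : Finset α) :
    (∀ e ∈ E, g (v1 e) ≠ g (v2 e)) →
    (∀ x, (E.filter (fun e => v1 e = x ∨ v2 e = x)).card ≤ k) →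
    ∃ col : α → ℕ, (∀ e ∈ E, col e < k) ∧
      ∀ e ∈ E, ∀ e' ∈ E, e ≠ e' →
        (v1 e = v1 e' ∨ v1 e = v2 e' ∨ v2 e = v1 e' ∨ v2 e = v2 e') → col e ≠ col e' := by
  induction E using Finset.strongInduction with
  | _ E ih =>
  intro hbip hdeg
  rcases E.eq_empty_or_nonempty with rfl | ⟨e₀, he₀⟩
  · exact ⟨fun _ => 0, by simp, by simp⟩
  set E' := E.erase e₀ with hE'def
  have hE'sub : E' ⊆ E := Finset.erase_subset _ _
  have hE'ss : E' ⊂ E := Finset.erase_ssubset he₀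
  obtain ⟨col, hcolk, hcol⟩ := ih E' hE'ss (fun e he => hbip e (hE'sub he))
    (fun x => le_trans (Finset.card_le_card
      (Finset.filter_subset_filter _ hE'sub)) (hdeg x))
  set u := v1 e₀ with hu
  set v := v2 e₀ with hv
  have hguv : g u ≠ g v := hbip e₀ he₀
  have huv : u ≠ v := fun h => hguv (by rw [h])
  -- existence of a missing color at an endpoint of e₀
  have exMissing : ∀ x, (v1 e₀ = x ∨ v2 e₀ = x) →
      ∃ c < k, ∀ e ∈ E', (v1 e = x ∨ v2 e = x) → col e ≠ c := by
    intro x hx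
    have he₀f : e₀ ∈ E.filter (fun e => v1 e = x ∨ v2 e = x) := by
      simp [Finset.mem_filter, he₀, hx]
    have hTcard : (E'.filter (fun e => v1 e = x ∨ v2 e = x)).card < k := by
      have h1 : E'.filter (fun e => v1 e = x ∨ v2 e = x)
          = (E.filter (fun e => v1 e = x ∨ v2 e = x)).erase e₀ := by
        rw [hE'def, Finset.filter_erase]
      have h2 := Finset.card_erase_of_mem he₀f
      have h3 := hdeg x
      have h4 : 1 ≤ (E.filter (fun e => v1 e = x ∨ v2 e = x)).card :=
        Finset.card_pos.mpr ⟨e₀, he₀f⟩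
      rw [h1, h2]; omega
    have hnotsub : ¬ (Finset.range k ⊆
        (E'.filter (fun e => v1 e = x ∨ v2 e = x)).image col) := by
      intro h
      have := Finset.card_le_card h
      have h5 := Finset.card_image_le (s := E'.filter (fun e => v1 e = x ∨ v2 e = x)) (f := col)
      rw [Finset.card_range] at this
      omega
    obtain ⟨c, hc, hcnot⟩ := Finset.not_subset.mp hnotsub
    refine ⟨c, Finset.mem_range.mp hc, fun e he htouch hce => hcnot ?_⟩
    exact Finset.mem_image.mpr ⟨e, Finset.mem_filter.mpr ⟨he, htouch⟩, hce⟩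
  obtain ⟨a, hak, hau⟩ := exMissing u (Or.inl rfl)
  obtain ⟨b, hbk, hbv⟩ := exMissing v (Or.inr rfl)
  by_cases hab : a = b
  · -- easy case: same missing color at both ends
    refine ⟨Function.update col e₀ a, ?_, ?_⟩
    · intro e he
      by_cases h : e = e₀
      · rw [h, Function.update_self]; exact hak
      · rw [Function.update_of_ne h]; exact hcolk e (Finset.mem_erase.mpr ⟨h, he⟩)
    · intro e he e' he' hne hadj
      by_cases h : e = e₀
      · subst h
        have he'E' : e' ∈ E' := Finset.mem_erase.mpr ⟨fun hh => hne hh.symm, he'⟩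
        rw [Function.update_self, Function.update_of_ne (fun hh => hne hh.symm)]
        rcases hadj with h1 | h1 | h1 | h1
        · exact fun hh => hau e' he'E' (Or.inl h1.symm) hh.symm
        · exact fun hh => hau e' he'E' (Or.inr h1.symm) hh.symm
        · exact fun hh => hbv e' he'E' (Or.inl h1.symm) (hab ▸ hh.symm)
        · exact fun hh => hbv e' he'E' (Or.inr h1.symm) (hab ▸ hh.symm)
      · by_cases h' : e' = e₀
        · subst h'
          have heE' : e ∈ E' := Finset.mem_erase.mpr ⟨h, he⟩
          rw [Function.update_self, Function.update_of_ne h]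
          rcases hadj with h1 | h1 | h1 | h1
          · exact fun hh => hau e heE' (Or.inl h1) hh
          · exact fun hh => hbv e heE' (Or.inl h1) (hab ▸ hh)
          · exact fun hh => hau e heE' (Or.inr h1) hh
          · exact fun hh => hbv e heE' (Or.inr h1) (hab ▸ hh)
        · rw [Function.update_of_ne h, Function.update_of_ne h']
          exact hcol e (Finset.mem_erase.mpr ⟨h, he⟩) e' (Finset.mem_erase.mpr ⟨h', he'⟩) hne hadj
  · -- alternating component swap
    set oc : ℕ → ℕ := fun c => if c = a then b else a with hoc
    have hoca : oc a = b := by simp [hoc]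
    have hocb : oc b = a := by simp [hoc, Ne.symm hab]
    set Step : ℕ × ℕ → ℕ × ℕ → Prop := fun s t =>
      ∃ e ∈ E', col e = oc s.2 ∧ t.2 = oc s.2 ∧
        ((v1 e = s.1 ∧ v2 e = t.1) ∨ (v2 e = s.1 ∧ v1 e = t.1)) with hStep
    set Reach : ℕ × ℕ → Prop := fun t => Relation.ReflTransGen Step (u, a) t with hReach
    set C : ℕ → Prop := fun x => ∃ c, Reach (x, c) with hC
    have hCu : C u := ⟨a, Relation.ReflTransGen.refl⟩
    have inv : ∀ s, Reach s → ((s.2 = a ∨ s.2 = b) ∧ (g s.1 = g u ↔ s.2 = a)) := by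
      intro s hs
      induction hs with
      | refl => exact ⟨Or.inl rfl, by simp⟩
      | tail hst hstep ihh =>
        rename_i s' t'
        obtain ⟨e, heE', hcole, ht2, hends⟩ := hstep
        have hgne : g t'.1 ≠ g s'.1 := by
          have := hbip e (hE'sub heE')
          rcases hends with ⟨h1, h2⟩ | ⟨h1, h2⟩
          · rw [h1, h2] at this; exact Ne.symm this
          · rw [h1, h2] at this; exact this
        constructor
        · rcases ihh.1 with h | h
          · rw [ht2, h, hoca]; exact Or.inr rfl
          · rw [ht2, h, hocb]; exact Or.inl rfl
        · rcases ihh.1 with hc | hc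
          · rw [hc] at ht2; rw [ht2, hoca]
            have hgs : g s'.1 = g u := ihh.2.mpr hc
            constructor
            · intro h; exact absurd (h.trans hgs.symm) hgne
            · intro h; exact absurd h (Ne.symm hab)
          · rw [hc] at ht2; rw [ht2, hocb]
            have hgs : g s'.1 ≠ g u := by
              intro h; have := ihh.2.mp h; rw [hc] at this; exact hab this.symm
            constructor
            · intro _; rfl
            · intro _
              have htriv : ∀ (x y z : Bool), x ≠ y → y ≠ z → x = z := by decide
              exact htriv _ _ _ hgne hgs
    have inversion : ∀ x c, Reach (x, c) → (x = u ∧ c = a) ∨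
        ∃ e ∈ E', col e = c ∧ ((v1 e = x ∧ C (v2 e)) ∨ (v2 e = x ∧ C (v1 e))) := by
      intro x c h
      rcases Relation.ReflTransGen.cases_tail h with heq | ⟨s, hs, hstep⟩
      · left; exact ⟨congrArg Prod.fst heq, congrArg Prod.snd heq⟩
      · right
        obtain ⟨e, heE', hcole, ht2, hends⟩ := hstep
        refine ⟨e, heE', by rw [hcole, ← ht2], ?_⟩
        have hCs : C s.1 := ⟨s.2, by rw [hReach]; exact hs⟩
        rcases hends with ⟨h1, h2⟩ | ⟨h1, h2⟩
        · exact Or.inr ⟨h2, h1 ▸ hCs⟩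
        · exact Or.inl ⟨h2, h1 ▸ hCs⟩
    have hne_ends : ∀ e ∈ E', v1 e ≠ v2 e := fun e he h => hbip e (hE'sub he) (by rw [h])
    have closure : ∀ x, C x → ∀ e ∈ E', (col e = a ∨ col e = b) →
        (v1 e = x ∨ v2 e = x) → (C (v1 e) ∧ C (v2 e)) := by
      intro x hCx e heE' hcab htouch
      obtain ⟨c, hc⟩ := hCx
      have hcab' := (inv _ hc).1
      by_cases hoceq : col e = oc c
      · rcases htouch with h1 | h1
        · have : Reach (v2 e, oc c) :=
            Relation.ReflTransGen.tail hc ⟨e, heE', hoceq, rfl, Or.inl ⟨h1, rfl⟩⟩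
          exact ⟨h1 ▸ ⟨c, hc⟩, ⟨oc c, this⟩⟩
        · have : Reach (v1 e, oc c) :=
            Relation.ReflTransGen.tail hc ⟨e, heE', hoceq, rfl, Or.inr ⟨h1, rfl⟩⟩
          exact ⟨⟨oc c, this⟩, h1 ▸ ⟨c, hc⟩⟩
      · have hcolc : col e = c := by
          rcases hcab' with h | h <;> rcases hcab with h' | h' <;>
            simp_all [hoca, hocb]
        rcases inversion x c hc with ⟨hxu, hca⟩ | ⟨e', he', hcole', hends'⟩
        · exfalso; exact hau e heE' (hxu ▸ htouch) (hcolc.trans hca)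
        · by_cases hee' : e' = e
          · subst hee'
            rcases hends' with ⟨h1, h2⟩ | ⟨h1, h2⟩
            · rcases htouch with h3 | h3
              · exact ⟨h3 ▸ ⟨c, hc⟩, h2⟩
              · exact absurd (h1.trans h3.symm) (hne_ends e' heE')
            · rcases htouch with h3 | h3
              · exact absurd (h3.trans h1.symm) (hne_ends e' heE')
              · exact ⟨h2, h3 ▸ ⟨c, hc⟩⟩
          · exfalso
            have hadj : v1 e = v1 e' ∨ v1 e = v2 e' ∨ v2 e = v1 e' ∨ v2 e = v2 e' := by
              rcases htouch with h3 | h3 <;> rcases hends' with ⟨h1, _⟩ | ⟨h1, _⟩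
              · exact Or.inl (h3.trans h1.symm)
              · exact Or.inr (Or.inl (h3.trans h1.symm))
              · exact Or.inr (Or.inr (Or.inl (h3.trans h1.symm)))
              · exact Or.inr (Or.inr (Or.inr (h3.trans h1.symm)))
            exact hcol e heE' e' he' (Ne.symm hee') hadj (hcolc.trans hcole'.symm)
    have hvnotC : ¬ C v := by
      rintro ⟨c, hc⟩
      have h1 := (inv _ hc).1
      have h2 := (inv _ hc).2
      have hca : c ≠ a := fun h => hguv ((h2.mpr h).symm)
      have hcb : c = b := by rcases h1 with h | h; exact absurd h hca; exact h
      rcases inversion v c hc with ⟨hvu, _⟩ | ⟨e, he, hcole, hends⟩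
      · exact huv hvu.symm
      · refine hbv e he ?_ (by rw [hcole, hcb])
        rcases hends with ⟨h1, _⟩ | ⟨h1, _⟩
        · exact Or.inl h1
        · exact Or.inr h1
    set SC : α → Prop := fun e => (col e = a ∨ col e = b) ∧ (C (v1 e) ∨ C (v2 e)) with hSC
    have sc_both : ∀ e ∈ E', SC e → C (v1 e) ∧ C (v2 e) := by
      intro e he hsc
      rcases hsc.2 with h | h
      · exact closure (v1 e) h e he hsc.1 (Or.inl rfl)
      · exact closure (v2 e) h e he hsc.1 (Or.inr rfl)
    set col₂ : α → ℕ := fun e => if SC e then oc (col e) else col e with hcol₂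
    have hcol₂k : ∀ e ∈ E', col₂ e < k := by
      intro e he
      rw [hcol₂]; dsimp only
      by_cases hsc : SC e
      · rw [if_pos hsc]
        rcases hsc.1 with h' | h' <;> rw [h']
        · rw [hoca]; exact hbk
        · rw [hocb]; exact hak
      · rw [if_neg hsc]; exact hcolk e he
    have hcol₂proper : ∀ e ∈ E', ∀ e' ∈ E', e ≠ e' →
        (v1 e = v1 e' ∨ v1 e = v2 e' ∨ v2 e = v1 e' ∨ v2 e = v2 e') → col₂ e ≠ col₂ e' := by
      intro e he e' he' hne hadj
      have base := hcol e he e' he' hne hadj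
      have key : ∀ f ∈ E', ∀ f' ∈ E', (v1 f = v1 f' ∨ v1 f = v2 f' ∨ v2 f = v1 f' ∨ v2 f = v2 f') →
          SC f → (col f' = a ∨ col f' = b) → SC f' := by
        intro f hf f' hf' hadjf hscf hcabf'
        obtain ⟨hC1, hC2⟩ := sc_both f hf hscf
        refine ⟨hcabf', ?_⟩
        rcases hadjf with h | h | h | h
        · exact Or.inl (h ▸ hC1)
        · exact Or.inr (h ▸ hC1)
        · exact Or.inl (h ▸ hC2)
        · exact Or.inr (h ▸ hC2)
      rw [hcol₂]; dsimp only
      by_cases s1 : SC e <;> by_cases s2 : SC e'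
      · rw [if_pos s1, if_pos s2]
        rcases s1.1 with h | h <;> rcases s2.1 with h' | h'
        · exact absurd (h.trans h'.symm) base
        · rw [h, h', hoca, hocb]; exact Ne.symm hab
        · rw [h, h', hoca, hocb]; exact hab
        · exact absurd (h.trans h'.symm) base
      · rw [if_pos s1, if_neg s2]
        intro heq
        have hcabe' : col e' = a ∨ col e' = b := by
          rcases s1.1 with h | h
          · rw [h, hoca] at heq; exact Or.inr heq.symm
          · rw [h, hocb] at heq; exact Or.inl heq.symm
        exact s2 (key e he e' he' hadj s1 hcabe')
      · rw [if_neg s1, if_pos s2]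
        intro heq
        have hadj' : v1 e' = v1 e ∨ v1 e' = v2 e ∨ v2 e' = v1 e ∨ v2 e' = v2 e := by
          rcases hadj with h | h | h | h
          · exact Or.inl h.symm
          · exact Or.inr (Or.inr (Or.inl h.symm))
          · exact Or.inr (Or.inl h.symm)
          · exact Or.inr (Or.inr (Or.inr h.symm))
        have hcabe : col e = a ∨ col e = b := by
          rcases s2.1 with h | h
          · rw [h, hoca] at heq; exact Or.inr heq
          · rw [h, hocb] at heq; exact Or.inl heq
        exact s1 (key e' he' e he hadj' s2 hcabe)
      · rw [if_neg s1, if_neg s2]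
        exact base
    have hcol₂u : ∀ e ∈ E', (v1 e = u ∨ v2 e = u) → col₂ e ≠ b := by
      intro e he htouch
      rw [hcol₂]; dsimp only
      by_cases hsc : SC e
      · rw [if_pos hsc]
        have hca : col e ≠ a := hau e he htouch
        have hcb : col e = b := by rcases hsc.1 with h | h; exact absurd h hca; exact h
        rw [hcb, hocb]; exact hab
      · rw [if_neg hsc]
        intro h
        refine hsc ⟨Or.inr h, ?_⟩
        rcases htouch with h1 | h1
        · exact Or.inl (h1 ▸ hCu)
        · exact Or.inr (h1 ▸ hCu)
    have hcol₂v : ∀ e ∈ E', (v1 e = v ∨ v2 e = v) → col₂ e ≠ b := by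
      intro e he htouch
      have hnsc : ¬ SC e := by
        intro hsc
        obtain ⟨h1, h2⟩ := sc_both e he hsc
        rcases htouch with h | h
        · exact hvnotC (h ▸ h1)
        · exact hvnotC (h ▸ h2)
      rw [hcol₂]; dsimp only
      rw [if_neg hnsc]
      exact hbv e he htouch
    refine ⟨Function.update col₂ e₀ b, ?_, ?_⟩
    · intro e he
      by_cases h : e = e₀
      · rw [h, Function.update_self]; exact hbk
      · rw [Function.update_of_ne h]; exact hcol₂k e (Finset.mem_erase.mpr ⟨h, he⟩)
    · intro e he e' he' hne hadj
      by_cases h : e = e₀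
      · subst h
        have he'E' : e' ∈ E' := Finset.mem_erase.mpr ⟨fun hh => hne hh.symm, he'⟩
        rw [Function.update_self, Function.update_of_ne (fun hh => hne hh.symm)]
        intro heq
        rcases hadj with h1 | h1 | h1 | h1
        · exact hcol₂u e' he'E' (Or.inl h1.symm) heq.symm
        · exact hcol₂u e' he'E' (Or.inr h1.symm) heq.symm
        · exact hcol₂v e' he'E' (Or.inl h1.symm) heq.symm
        · exact hcol₂v e' he'E' (Or.inr h1.symm) heq.symm
      · by_cases h' : e' = e₀
        · subst h'
          have heE' : e ∈ E' := Finset.mem_erase.mpr ⟨h, he⟩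
          rw [Function.update_self, Function.update_of_ne h]
          rcases hadj with h1 | h1 | h1 | h1
          · exact hcol₂u e heE' (Or.inl h1)
          · exact hcol₂v e heE' (Or.inl h1)
          · exact hcol₂u e heE' (Or.inr h1)
          · exact hcol₂v e heE' (Or.inr h1)
        · rw [Function.update_of_ne h, Function.update_of_ne h']
          exact hcol₂proper e (Finset.mem_erase.mpr ⟨h, he⟩) e' (Finset.mem_erase.mpr ⟨h', he'⟩) hne hadj


lemma stutter_length {α : Type*} (w : List α) (k : ℕ) :
    (stutterSeq w k).length = k * w.length := by
  induction w with
  | nil => simp [stutterSeq]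
  | cons a w ih =>
    simp only [stutterSeq, List.flatMap_cons, List.length_append, List.length_replicate,
      List.length_cons] at *
    rw [ih]; ring

lemma stutter_getD {α : Type*} [Inhabited α] (w : List α) (k : ℕ) (hk : 0 < k) :
    ∀ j, j < k * w.length →
    (stutterSeq w k).getD j default = w.getD (j / k) default := by
  induction w with
  | nil => intro j hj; simp at hj
  | cons a w ih =>
    intro j hj
    have hsplit : stutterSeq (a :: w) k = List.replicate k a ++ stutterSeq w k := by
      simp [stutterSeq]
    rw [hsplit]
    by_cases hjk : j < k
    · rw [List.getD_append _ _ _ _ (by simpa using hjk)]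
      rw [Nat.div_eq_of_lt hjk]
      rw [List.getD_eq_getElem?_getD, List.getElem?_replicate_of_lt hjk]
      simp
    · push_neg at hjk
      rw [List.getD_append_right _ _ _ _ (by simpa using hjk)]
      simp only [List.length_replicate]
      have hdiv : j / k = (j - k) / k + 1 := by
        have := Nat.add_div_right (j - k) hk
        rw [Nat.sub_add_cancel hjk] at this
        omega
      rw [hdiv]
      have hlt : j - k < k * w.length := by
        have : k * (a :: w).length = k * w.length + k := by simp; ring
        omega
      rw [ih (j - k) hlt]
      rfl

lemma multiset_fiber_sum {β : Type*} (k : ℕ) (col : β → ℕ) :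
    ∀ (m : Multiset β), (∀ p ∈ m, col p < k) →
      (∑ i : Fin k, m.filter (fun p => col p = i.val)) = m := by
  intro m
  induction m using Multiset.induction with
  | empty => intro _; simp
  | cons a m ih =>
    intro hbound
    have hak : col a < k := hbound a (Multiset.mem_cons_self a m)
    have hm : ∀ p ∈ m, col p < k := fun p hp => hbound p (Multiset.mem_cons_of_mem hp)
    have hfc : ∀ i : Fin k, (a ::ₘ m).filter (fun p => col p = i.val)
        = (if col a = i.val then ({a} : Multiset β) else 0) + m.filter (fun p => col p = i.val) := by
      intro i
      rw [Multiset.filter_cons]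
    calc (∑ i : Fin k, (a ::ₘ m).filter (fun p => col p = i.val))
        = ∑ i : Fin k, ((if col a = i.val then ({a} : Multiset β) else 0)
            + m.filter (fun p => col p = i.val)) := by
          exact Finset.sum_congr rfl (fun i _ => hfc i)
      _ = (∑ i : Fin k, if col a = i.val then ({a} : Multiset β) else 0)
            + ∑ i : Fin k, m.filter (fun p => col p = i.val) := Finset.sum_add_distrib
      _ = {a} + m := by
          rw [ih hm]
          congr 1
          rw [Finset.sum_eq_single (⟨col a, hak⟩ : Fin k)]
          · simp
          · intro i _ hne
            rw [if_neg]
            intro h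
            exact hne (Fin.ext h.symm)
          · intro h; exact absurd (Finset.mem_univ _) h
      _ = a ::ₘ m := by rw [Multiset.singleton_add]

lemma map_finsum' {β γ ι : Type*} (proj : β → γ) (s : Finset ι) (F : ι → Multiset β) :
    (∑ i ∈ s, (F i).map proj) = (∑ i ∈ s, F i).map proj := by
  induction s using Finset.induction with
  | empty => simp
  | insert _ _ h ih => rw [Finset.sum_insert h, Finset.sum_insert h, Multiset.map_add, ih]

lemma sum_finsum {β ι : Type*} [AddCommMonoid β] (s : Finset ι) (F : ι → Multiset β) :
    (∑ i ∈ s, (F i).sum) = (∑ i ∈ s, F i).sum := by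
  induction s using Finset.induction with
  | empty => simp
  | insert _ _ h ih => rw [Finset.sum_insert h, Finset.sum_insert h, Multiset.sum_add, ih]

lemma div_lt_imp_lt {k x y : ℕ} (h : x / k < y / k) : x < y := by
  by_contra hle
  push_neg at hle
  exact absurd (Nat.div_le_div_right (c := k) hle) (by omega)

/-- any structure compatible with the k-stutter of w (bipartite
model) induces a bipartite interaction multigraph of max degree ≤ k on the
positions of w, and its base pairs can be partitioned into k structures
compatible with w whose energies sum to that of the whole structure. -/

theorem stmt16 {α : Type*} [Inhabited α] (R : α → α → Prop) (E : α → α → ℝ)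
    (hbip : Bipartite R) (w : List α) (k : ℕ) (hk : 1 ≤ k)
    (S' : SecStr) (hcomp : compat R (stutterSeq w k) S') :
    -- max degree ≤ k in the interaction multigraph:
    (∀ i < w.length,
        (S'.pairs.filter (fun p => p.1 / k = i ∨ p.2 / k = i)).card ≤ k) ∧
    -- bipartiteness of the interaction multigraph:
    (∃ g : ℕ → Bool, ∀ p ∈ S'.pairs, g (p.1 / k) ≠ g (p.2 / k)) ∧
    -- partition into k structures on w:
    ∃ f : Fin k → SecStr,
      (∀ i, compat R w (f i)) ∧
      (S'.pairs.val.map (fun p => (p.1 / k, p.2 / k)) = ∑ i : Fin k, (f i).pairs.val) ∧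
      (∑ i : Fin k, energy E w (f i) = energy E (stutterSeq w k) S') := by
  classical
  obtain ⟨fb, hfb⟩ := hbip
  have hk0 : 0 < k := hk
  have hslen : (stutterSeq w k).length = k * w.length := stutter_length w k
  have hub2 : ∀ p ∈ S'.pairs, p.2 < k * w.length := by
    intro p hp
    have := S'.ub p hp
    rw [hcomp.1, hslen] at this
    exact this
  have hub1 : ∀ p ∈ S'.pairs, p.1 < k * w.length :=
    fun p hp => lt_trans (S'.lt p hp) (hub2 p hp)
  -- degree bound
  have hdeg : ∀ i < w.length,
      (S'.pairs.filter (fun p => p.1 / k = i ∨ p.2 / k = i)).card ≤ k := by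
    intro i _
    have hcard : (Finset.Ico (k * i) (k * i + k)).card = k := by
      rw [Nat.card_Ico]; omega
    refine le_trans ?_ (le_of_eq hcard)
    apply Finset.card_le_card_of_injOn (fun p => if p.1 / k = i then p.1 else p.2)
    · intro p hp
      obtain ⟨hpm, htch⟩ := Finset.mem_filter.mp hp
      by_cases h1 : p.1 / k = i
      · simp only [Finset.mem_coe]
        rw [if_pos h1]
        have hdm := Nat.div_add_mod p.1 k
        have hml := Nat.mod_lt p.1 hk0
        rw [h1] at hdm
        exact Finset.mem_Ico.mpr (by omega)
      · simp only [Finset.mem_coe]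
        rw [if_neg h1]
        have h2 : p.2 / k = i := by rcases htch with h | h; exact absurd h h1; exact h
        have hdm := Nat.div_add_mod p.2 k
        have hml := Nat.mod_lt p.2 hk0
        rw [h2] at hdm
        exact Finset.mem_Ico.mpr (by omega)
    · intro p hp q hq heq
      by_contra hne
      have honce := S'.once p (Finset.mem_filter.mp hp).1 q (Finset.mem_filter.mp hq).1 hne
      have hp' : (if p.1 / k = i then p.1 else p.2) = p.1 ∨
          (if p.1 / k = i then p.1 else p.2) = p.2 := by
        split <;> [exact Or.inl rfl; exact Or.inr rfl]
      have hq' : (if q.1 / k = i then q.1 else q.2) = q.1 ∨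
          (if q.1 / k = i then q.1 else q.2) = q.2 := by
        split <;> [exact Or.inl rfl; exact Or.inr rfl]
      simp only at heq
      rcases hp' with h | h <;> rcases hq' with h' | h' <;> rw [h, h'] at heq <;> tauto
  -- values of stuttered sequence
  have hR' : ∀ p ∈ S'.pairs,
      R (w.getD (p.1 / k) default) (w.getD (p.2 / k) default) := by
    intro p hp
    have hR := hcomp.2 p hp
    rwa [stutter_getD w k hk0 p.1 (hub1 p hp), stutter_getD w k hk0 p.2 (hub2 p hp)] at hR
  -- bipartition on blocks
  have hgp : ∀ p ∈ S'.pairs,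
      (fun i => fb (w.getD i default)) (p.1 / k) ≠ (fun i => fb (w.getD i default)) (p.2 / k) :=
    fun p hp => hfb _ _ (hR' p hp)
  refine ⟨hdeg, ⟨fun i => fb (w.getD i default), hgp⟩, ?_⟩
  -- degree bound for all vertices
  have hdegall : ∀ x,
      (S'.pairs.filter (fun p => p.1 / k = x ∨ p.2 / k = x)).card ≤ k := by
    intro x
    by_cases hx : ∃ p ∈ S'.pairs, p.1 / k = x ∨ p.2 / k = x
    · obtain ⟨p, hp, htch⟩ := hx
      have h2 : p.2 / k < w.length := by
        rw [Nat.div_lt_iff_lt_mul hk0, mul_comm]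
        exact hub2 p hp
      have h1 : p.1 / k ≤ p.2 / k := Nat.div_le_div_right (le_of_lt (S'.lt p hp))
      have hxlt : x < w.length := by rcases htch with h | h <;> omega
      exact hdeg x hxlt
    · push_neg at hx
      rw [Finset.filter_eq_empty_iff.mpr
        (fun p hp h => by rcases h with h | h; exacts [(hx p hp).1 h, (hx p hp).2 h])]
      simp
  obtain ⟨col, hcolk, hcol⟩ :=
    koenig k (fun p => p.1 / k) (fun p => p.2 / k) (fun i => fb (w.getD i default))
      S'.pairs hgp hdegall
  set proj : ℕ × ℕ → ℕ × ℕ := fun p => (p.1 / k, p.2 / k) with hproj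
  set F : Fin k → Finset (ℕ × ℕ) := fun i => S'.pairs.filter (fun p => col p = i.val) with hF
  have hFsub : ∀ i, F i ⊆ S'.pairs := fun i => Finset.filter_subset _ _
  have hltdiv : ∀ p ∈ S'.pairs, p.1 / k < p.2 / k := by
    intro p hp
    refine lt_of_le_of_ne (Nat.div_le_div_right (le_of_lt (S'.lt p hp))) ?_
    intro h
    exact hgp p hp (by rw [h])
  have hnadj : ∀ i : Fin k, ∀ p ∈ F i, ∀ q ∈ F i, p ≠ q →
      ¬ (p.1 / k = q.1 / k ∨ p.1 / k = q.2 / k ∨ p.2 / k = q.1 / k ∨ p.2 / k = q.2 / k) := by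
    intro i p hp q hq hne hadj
    obtain ⟨hpm, hpc⟩ := Finset.mem_filter.mp hp
    obtain ⟨hqm, hqc⟩ := Finset.mem_filter.mp hq
    exact hcol p hpm q hqm hne hadj (hpc.trans hqc.symm)
  have hinj : ∀ i : Fin k, ∀ p ∈ F i, ∀ q ∈ F i, proj p = proj q → p = q := by
    intro i p hp q hq hpq
    by_contra hne
    exact hnadj i p hp q hq hne (Or.inl (congrArg Prod.fst hpq))
  -- SecStr fields for each class
  have hlt' : ∀ i : Fin k, ∀ P ∈ (F i).image proj, P.1 < P.2 := by
    intro i P hP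
    obtain ⟨p, hp, rfl⟩ := Finset.mem_image.mp hP
    exact hltdiv p (hFsub i hp)
  have hub' : ∀ i : Fin k, ∀ P ∈ (F i).image proj, P.2 < w.length := by
    intro i P hP
    obtain ⟨p, hp, rfl⟩ := Finset.mem_image.mp hP
    show p.2 / k < w.length
    rw [Nat.div_lt_iff_lt_mul hk0, mul_comm]
    exact hub2 p (hFsub i hp)
  have honce' : ∀ i : Fin k, ∀ P ∈ (F i).image proj, ∀ Q ∈ (F i).image proj, P ≠ Q →
      P.1 ≠ Q.1 ∧ P.1 ≠ Q.2 ∧ P.2 ≠ Q.1 ∧ P.2 ≠ Q.2 := by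
    intro i P hP Q hQ hPQ
    obtain ⟨p, hp, rfl⟩ := Finset.mem_image.mp hP
    obtain ⟨q, hq, rfl⟩ := Finset.mem_image.mp hQ
    have hne : p ≠ q := by rintro rfl; exact hPQ rfl
    have := hnadj i p hp q hq hne
    push_neg at this
    exact this
  have hnc' : ∀ i : Fin k, ∀ P ∈ (F i).image proj, ∀ Q ∈ (F i).image proj,
      ¬ (P.1 < Q.1 ∧ Q.1 < P.2 ∧ P.2 < Q.2) := by
    intro i P hP Q hQ h
    obtain ⟨p, hp, rfl⟩ := Finset.mem_image.mp hP
    obtain ⟨q, hq, rfl⟩ := Finset.mem_image.mp hQ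
    exact S'.noncross p (hFsub i hp) q (hFsub i hq)
      ⟨div_lt_imp_lt h.1, div_lt_imp_lt h.2.1, div_lt_imp_lt h.2.2⟩
  refine ⟨fun i => ⟨w.length, (F i).image proj, hlt' i, hub' i, honce' i, hnc' i⟩, ?_, ?_, ?_⟩
  · -- compatibility
    intro i
    refine ⟨rfl, ?_⟩
    intro P hP
    obtain ⟨p, hp, rfl⟩ := Finset.mem_image.mp hP
    exact hR' p (hFsub i hp)
  · -- multiset partition
    have himgval : ∀ i : Fin k, ((F i).image proj).val = (F i).val.map proj := by
      intro i
      rw [Finset.image_val, Multiset.dedup_eq_self.mpr]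
      exact Multiset.Nodup.map_on (fun x hx y hy => hinj i x hx y hy) (F i).nodup
    show S'.pairs.val.map proj = ∑ i : Fin k, ((F i).image proj).val
    calc S'.pairs.val.map proj
        = (∑ i : Fin k, (F i).val).map proj := by
          congr 1
          rw [hF]
          simp only [Finset.filter_val]
          exact (multiset_fiber_sum k col S'.pairs.val (fun p hp => hcolk p hp)).symm
      _ = ∑ i : Fin k, (F i).val.map proj := (map_finsum' proj Finset.univ _).symm
      _ = ∑ i : Fin k, ((F i).image proj).val := by
          exact Finset.sum_congr rfl (fun i _ => (himgval i).symm)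
  · -- energy
    have hterm : ∀ i : Fin k,
        (energy E w ⟨w.length, (F i).image proj, hlt' i, hub' i, honce' i, hnc' i⟩ : ℝ)
          = ∑ p ∈ F i, E (w.getD (p.1 / k) default) (w.getD (p.2 / k) default) := by
      intro i
      exact Finset.sum_image (hinj i)
    rw [Finset.sum_congr rfl (fun i _ => hterm i)]
    have hrhs : energy E (stutterSeq w k) S'
        = ∑ p ∈ S'.pairs, E (w.getD (p.1 / k) default) (w.getD (p.2 / k) default) := by
      refine Finset.sum_congr rfl (fun p hp => ?_)
      rw [stutter_getD w k hk0 p.1 (hub1 p hp), stutter_getD w k hk0 p.2 (hub2 p hp)]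
    rw [hrhs]
    set h : ℕ × ℕ → ℝ := fun p => E (w.getD (p.1 / k) default) (w.getD (p.2 / k) default)
      with hh
    calc (∑ i : Fin k, ∑ p ∈ F i, h p)
        = ∑ i : Fin k, ((F i).val.map h).sum := by
          exact Finset.sum_congr rfl (fun i _ => Finset.sum_eq_multiset_sum _ _)
      _ = (∑ i : Fin k, (F i).val.map h).sum := sum_finsum Finset.univ _
      _ = ((∑ i : Fin k, (F i).val).map h).sum := by rw [map_finsum']
      _ = (S'.pairs.val.map h).sum := by
          congr 1
          congr 1
          rw [hF]
          simp only [Finset.filter_val]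
          exact multiset_fiber_sum k col S'.pairs.val (fun p hp => hcolk p hp)
      _ = ∑ p ∈ S'.pairs, h p := (Finset.sum_eq_multiset_sum _ _).symm
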